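/- Multiplicativity under horizontal concatenation: if T_1 and T_2 are balanced tables for the same format (n_1,…,n_d) of degrees M_1, M_2, then Δ_{T_1} · Δ_{T_2} = Δ_{(T_1 T_2)}, where (T_1 T_2) is the horizontal concatenation in which each entry of row i of T_2 is increased by M_1/n_i. -/
import Mathlib


open scoped Classical

/-- Sign contribution of one row `t` of a balanced table with `K` blocks: the product, over
the blocks of positions carrying equal entry `v ∈ {0,…,K−1}`, of the sign of the sequence of
`σ`-values read along the block in increasing position order (`0` if this sequence is not a
permutation of `[n_i]`); the sign of a permutation is computed as `(−1)^inversions`. -/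
noncomputable def rowSgn (M ni K : ℕ) (t : Fin M → ℕ) (σ : Fin M → Fin ni) : ℤ :=
  ∏ v ∈ Finset.range K,
    if ∀ x : Fin ni, ∃! p : Fin M, t p = v ∧ σ p = x then
      (-1 : ℤ) ^ Set.ncard {pq : Fin M × Fin M |
        pq.1 < pq.2 ∧ t pq.1 = v ∧ t pq.2 = v ∧ σ pq.2 < σ pq.1}
    else 0

/-- The invariant polynomial `Δ_T` of a `d × M` balanced table `T` (with entries of row `i`
in `{0,…,M/n_i − 1}`), as a function of hypermatrices `X` of format `n_1 × ⋯ × n_d`: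
`Δ_T(X) = Σ_{σ_1,…,σ_d} ∏_i sgn_{T_i}(σ_i) · ∏_{p=1}^M X_{σ_1(p),…,σ_d(p)}`. -/
noncomputable def Delta (d M : ℕ) (n : Fin d → ℕ) (T : Fin d → Fin M → ℕ)
    (X : ((i : Fin d) → Fin (n i)) → ℂ) : ℂ :=
  ∑ σ : (i : Fin d) → Fin M → Fin (n i),
    ((∏ i, rowSgn M (n i) (M / n i) (T i) (σ i) : ℤ) : ℂ) *
      ∏ p : Fin M, X fun i => σ i p

/-- `T` is a `d × M` balanced table for the format `n`: row `i` has entries in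
`{0,…,M/n_i − 1}` and contains each such value exactly `n i` times. -/
def IsBalanced (d M : ℕ) (n : Fin d → ℕ) (T : Fin d → Fin M → ℕ) : Prop :=
  ∀ i : Fin d, (∀ p, T i p < M / n i) ∧
    ∀ v : ℕ, v < M / n i → Set.ncard {p : Fin M | T i p = v} = n i

noncomputable def rowFactor (M ni : ℕ) (t : Fin M → ℕ) (σ : Fin M → Fin ni) (v : ℕ) : ℤ :=
  if ∀ x : Fin ni, ∃! p : Fin M, t p = v ∧ σ p = x then
    (-1 : ℤ) ^ Set.ncard {pq : Fin M × Fin M |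
      pq.1 < pq.2 ∧ t pq.1 = v ∧ t pq.2 = v ∧ σ pq.2 < σ pq.1}
  else 0

lemma rowSgn_eq_prod (M ni K : ℕ) (t : Fin M → ℕ) (σ : Fin M → Fin ni) :
    rowSgn M ni K t σ = ∏ v ∈ Finset.range K, rowFactor M ni t σ v := rfl

lemma rowFactor_transfer {M N ni : ℕ} (e : Fin M → Fin N) (he : StrictMono e)
    (t' : Fin M → ℕ) (t : Fin N → ℕ) (σ' : Fin M → Fin ni) (σ : Fin N → Fin ni)
    (v v' : ℕ)
    (hsupp : ∀ p : Fin N, t p = v → ∃ q, e q = p)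
    (ht : ∀ q, t (e q) = v ↔ t' q = v')
    (hσ : ∀ q, σ (e q) = σ' q) :
    rowFactor N ni t σ v = rowFactor M ni t' σ' v' := by
  have hcond : (∀ x : Fin ni, ∃! p : Fin N, t p = v ∧ σ p = x) ↔
      (∀ x : Fin ni, ∃! q : Fin M, t' q = v' ∧ σ' q = x) := by
    constructor
    · intro h x
      obtain ⟨p, ⟨hp1, hp2⟩, hu⟩ := h x
      obtain ⟨q, rfl⟩ := hsupp p hp1
      refine ⟨q, ⟨(ht q).mp hp1, by rw [← hσ]; exact hp2⟩, fun q' ⟨h1', h2'⟩ => ?_⟩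
      exact he.injective (hu (e q') ⟨(ht q').mpr h1', by rw [hσ]; exact h2'⟩)
    · intro h x
      obtain ⟨q, ⟨hq1, hq2⟩, hu⟩ := h x
      refine ⟨e q, ⟨(ht q).mpr hq1, by rw [hσ]; exact hq2⟩, fun p ⟨h1, h2⟩ => ?_⟩
      obtain ⟨q', rfl⟩ := hsupp p h1
      exact congrArg e (hu q' ⟨(ht q').mp h1, by rw [← hσ]; exact h2⟩)
  have hset : {pq : Fin N × Fin N | pq.1 < pq.2 ∧ t pq.1 = v ∧ t pq.2 = v ∧ σ pq.2 < σ pq.1}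
      = (fun qq : Fin M × Fin M => (e qq.1, e qq.2)) ''
        {pq : Fin M × Fin M | pq.1 < pq.2 ∧ t' pq.1 = v' ∧ t' pq.2 = v' ∧ σ' pq.2 < σ' pq.1} := by
    ext ⟨p, q⟩
    constructor
    · rintro ⟨hlt, hp, hq, hσlt⟩
      obtain ⟨a, rfl⟩ := hsupp p hp
      obtain ⟨b, rfl⟩ := hsupp q hq
      exact ⟨(a, b), ⟨he.lt_iff_lt.mp hlt, (ht a).mp hp, (ht b).mp hq,
        by rw [← hσ, ← hσ]; exact hσlt⟩, rfl⟩
    · rintro ⟨⟨a, b⟩, ⟨hlt, ha, hb, hσlt⟩, hE⟩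
      obtain ⟨rfl, rfl⟩ := Prod.mk.injEq .. ▸ hE
      exact ⟨he hlt, (ht a).mpr ha, (ht b).mpr hb, by rw [hσ, hσ]; exact hσlt⟩
  have hinj : Function.Injective (fun qq : Fin M × Fin M => (e qq.1, e qq.2)) := by
    rintro ⟨a, b⟩ ⟨c, d⟩ h
    simp only [Prod.mk.injEq] at h
    exact Prod.ext (he.injective h.1) (he.injective h.2)
  unfold rowFactor
  rw [hset, Set.ncard_image_of_injective _ hinj]
  exact if_congr hcond rfl rfl

lemma rowSgn_concat (M₁ M₂ ni K₁ K₂ : ℕ) (t₁ : Fin M₁ → ℕ) (t₂ : Fin M₂ → ℕ)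
    (h₁ : ∀ p, t₁ p < K₁)
    (σ₁ : Fin M₁ → Fin ni) (σ₂ : Fin M₂ → Fin ni) :
    rowSgn (M₁ + M₂) ni (K₁ + K₂)
      (fun p => Fin.addCases (motive := fun _ => ℕ) t₁ (fun q => t₂ q + K₁) p)
      (fun p => Fin.addCases (motive := fun _ => Fin ni) σ₁ σ₂ p)
    = rowSgn M₁ ni K₁ t₁ σ₁ * rowSgn M₂ ni K₂ t₂ σ₂ := by
  simp only [rowSgn_eq_prod]
  rw [Finset.prod_range_add]
  congr 1
  · refine Finset.prod_congr rfl fun v hv => ?_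
    rw [Finset.mem_range] at hv
    refine rowFactor_transfer (Fin.castAdd M₂)
      (fun a b hab => by simp only [Fin.lt_def, Fin.coe_castAdd]; exact hab)
      _ _ _ _ v v ?_ ?_ ?_
    · intro p hp
      induction p using Fin.addCases with
      | left q => exact ⟨q, rfl⟩
      | right q => simp only [Fin.addCases_right] at hp; omega
    · intro q; simp only [Fin.addCases_left]
    · intro q; simp only [Fin.addCases_left]
  · refine Finset.prod_congr rfl fun w hw => ?_
    rw [Finset.mem_range] at hw
    refine rowFactor_transfer (Fin.natAdd M₁)
      (fun a b hab => by simp only [Fin.lt_def, Fin.coe_natAdd]; exact Nat.add_lt_add_left hab M₁)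
      _ _ _ _ (K₁ + w) w ?_ ?_ ?_
    · intro p hp
      induction p using Fin.addCases with
      | left q => simp only [Fin.addCases_left] at hp; have := h₁ q; omega
      | right q => exact ⟨q, rfl⟩
    · intro q; simp only [Fin.addCases_right]; omega
    · intro q; simp only [Fin.addCases_right]

lemma balanced_div {M nn : ℕ} {t : Fin M → ℕ} (hlt : ∀ p, t p < M / nn)
    (hcard : ∀ v : ℕ, v < M / nn → Set.ncard {p : Fin M | t p = v} = nn) :
    M = (M / nn) * nn := by
  rcases Nat.eq_zero_or_pos M with rfl | hM
  · simp
  rcases Nat.eq_zero_or_pos nn with rfl | hn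
  · exact absurd (hlt ⟨0, hM⟩) (by simp)
  have key := Finset.card_eq_sum_card_fiberwise
    (f := t) (s := Finset.univ) (t := Finset.range (M / nn))
    (fun p _ => Finset.mem_range.mpr (hlt p))
  have hfib : ∀ v ∈ Finset.range (M / nn),
      (Finset.univ.filter (fun p => t p = v)).card = nn := by
    intro v hv
    have h := hcard v (Finset.mem_range.mp hv)
    rwa [show {p : Fin M | t p = v} = ↑(Finset.univ.filter (fun p => t p = v)) by
      ext p; simp, Set.ncard_coe_finset] at h
  rw [Finset.sum_congr rfl hfib, Finset.sum_const, Finset.card_range, smul_eq_mul] at key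
  simpa using key

lemma addCases_comp {M₁ M₂ : ℕ} {α : Sort*} (f : Fin (M₁ + M₂) → α) (p : Fin (M₁ + M₂)) :
    Fin.addCases (motive := fun _ => α)
      (fun q => f (Fin.castAdd M₂ q)) (fun q => f (Fin.natAdd M₁ q)) p = f p := by
  induction p using Fin.addCases with
  | left q => simp only [Fin.addCases_left]
  | right q => simp only [Fin.addCases_right]

/-- Multiplicativity under horizontal concatenation:
`Δ_{T₁} · Δ_{T₂} = Δ_{(T₁T₂)}`, where in the concatenated table each entry of row `i`
of `T₂` is increased by `M₁/n_i`. -/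
theorem delta_horizontal_concat (d M₁ M₂ : ℕ) (n : Fin d → ℕ)
    (T₁ : Fin d → Fin M₁ → ℕ) (T₂ : Fin d → Fin M₂ → ℕ)
    (h₁ : IsBalanced d M₁ n T₁) (h₂ : IsBalanced d M₂ n T₂) :
    ∀ X : ((i : Fin d) → Fin (n i)) → ℂ,
      Delta d M₁ n T₁ X * Delta d M₂ n T₂ X =
        Delta d (M₁ + M₂) n
          (fun i p => Fin.addCases (motive := fun _ => ℕ)
            (fun p₁ => T₁ i p₁) (fun p₂ => T₂ i p₂ + M₁ / n i) p) X := by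
  intro X
  have hK : ∀ i, (M₁ + M₂) / n i = M₁ / n i + M₂ / n i := by
    intro i
    rcases Nat.eq_zero_or_pos (n i) with h0 | h0
    · simp [h0]
    have e1 : M₁ = M₁ / n i * n i := balanced_div (h₁ i).1 (h₁ i).2
    have e2 : M₂ = M₂ / n i * n i := balanced_div (h₂ i).1 (h₂ i).2
    conv_lhs => rw [e1, e2, ← Nat.add_mul, Nat.mul_div_cancel _ h0]
  let e : ((i : Fin d) → Fin M₁ → Fin (n i)) × ((i : Fin d) → Fin M₂ → Fin (n i)) ≃
      ((i : Fin d) → Fin (M₁ + M₂) → Fin (n i)) :=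
    { toFun := fun σ i p => Fin.addCases (motive := fun _ => Fin (n i)) (σ.1 i) (σ.2 i) p
      invFun := fun σ => (fun i q => σ i (Fin.castAdd M₂ q), fun i q => σ i (Fin.natAdd M₁ q))
      left_inv := fun σ => Prod.ext
        (by funext i q; simp only [Fin.addCases_left])
        (by funext i q; simp only [Fin.addCases_right])
      right_inv := fun σ => by funext i p; exact addCases_comp (σ i) p }
  unfold Delta
  rw [Finset.sum_mul_sum, ← Equiv.sum_comp e, Fintype.sum_prod_type]
  refine Finset.sum_congr rfl fun σa _ => Finset.sum_congr rfl fun σb _ => ?_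
  simp only [e, Equiv.coe_fn_mk]
  have hsgn : ∀ i, rowSgn (M₁ + M₂) (n i) ((M₁ + M₂) / n i)
      (fun p => Fin.addCases (motive := fun _ => ℕ)
        (fun p₁ => T₁ i p₁) (fun p₂ => T₂ i p₂ + M₁ / n i) p)
      (fun p => Fin.addCases (motive := fun _ => Fin (n i)) (σa i) (σb i) p)
      = rowSgn M₁ (n i) (M₁ / n i) (T₁ i) (σa i) * rowSgn M₂ (n i) (M₂ / n i) (T₂ i) (σb i) := by
    intro i
    rw [hK i]
    exact rowSgn_concat M₁ M₂ (n i) (M₁ / n i) (M₂ / n i) (T₁ i) (T₂ i) (h₁ i).1 (σa i) (σb i)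
  have hX : (∏ p : Fin (M₁ + M₂),
        X fun i => Fin.addCases (motive := fun _ => Fin (n i)) (σa i) (σb i) p)
      = (∏ p : Fin M₁, X fun i => σa i p) * ∏ p : Fin M₂, X fun i => σb i p := by
    rw [Fin.prod_univ_add]
    congr 1
    · refine Finset.prod_congr rfl fun p _ => ?_
      congr 1; funext i; simp only [Fin.addCases_left]
    · refine Finset.prod_congr rfl fun p _ => ?_
      congr 1; funext i; simp only [Fin.addCases_right]
  rw [Finset.prod_congr rfl (fun i _ => hsgn i), Finset.prod_mul_distrib, hX]
  push_cast
  ring
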